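/- (Lemma 2.) For every integer n ≥ 1, the following identity holds in ℚ: Σ_{k=1}^{n} (1/k)·Σ_{d | gcd(n,k)} φ(d)·C(n/d − 1, k/d − 1) = −1 + (1/n)·Σ_{d | n} φ(d)·2^{n/d}. -/

import Mathlib

open Finset

/-- Two (0,1)-configurations on `ZMod n` are related if one is carried to the
other by a rotation or a reflection. -/
def DihedralRel (n : ℕ) (c c' : ZMod n → Bool) : Prop :=
  (∃ t : ZMod n, (fun i => c (i + t)) = c') ∨ (∃ a : ZMod n, (fun i => c (a - i)) = c')

/-- The number of orbits of the dihedral action meeting the class `P`. -/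
noncomputable def orbitCount (n : ℕ) (P : (ZMod n → Bool) → Prop) : ℕ :=
  Nat.card {q : Quot (DihedralRel n) // ∃ c, Quot.mk (DihedralRel n) c = q ∧ P c}

/-- The number of positions with value `true` in a configuration. -/
noncomputable def numOnes (n : ℕ) (c : ZMod n → Bool) : ℕ := Nat.card {i : ZMod n // c i = true}

/-- A configuration is symmetric with respect to rotation if it has a nontrivial
rotational self-coincidence. -/
def RotSym (n : ℕ) (c : ZMod n → Bool) : Prop := ∃ t : ZMod n, t ≠ 0 ∧ ∀ i, c (i + t) = c i

/-- A configuration has a diameter of symmetry. -/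
def DiamSym (n : ℕ) (c : ZMod n → Bool) : Prop := ∃ a : ZMod n, ∀ i, c (a - i) = c i

/-- A configuration has at least `m` 0's between any two adjacent 1's. -/
def Spaced (n m : ℕ) (c : ZMod n → Bool) : Prop :=
  ∀ i : ZMod n, c i = true → ∀ j : ℕ, 1 ≤ j → j ≤ m → c (i + (j : ZMod n)) = false

/-- Gupta's expression `R(n,k)` from the Reis problem. -/
def ReisR (n k : ℕ) : ℚ :=
  (1/2) * ((Nat.choose ((n - k % 2) / 2) (k / 2) : ℚ) +
    (1/(k : ℚ)) * ∑ d ∈ (Nat.gcd n k).divisors,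
      (Nat.totient d : ℚ) * (Nat.choose (n / d - 1) (k / d - 1) : ℚ))

/-- `m`-Fibonacci numbers of type 1. -/
def Fgen (m n : ℕ) : ℕ :=
  if _h : n ≤ m then 1 else Fgen m (n - 1) + Fgen m (n - m - 1)
termination_by n
decreasing_by all_goals omega

/-- `m`-Fibonacci numbers of type 2. -/
def fgen (m n : ℕ) : ℕ :=
  if _h : n ≤ m then (if n ≤ (m - 1) / 2 then 1 else 2)
  else fgen m (n - 1) + fgen m (n - m - 1)
termination_by n
decreasing_by all_goals omega

lemma keysum (m : ℕ) (hm : 1 ≤ m) :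
    ∑ j ∈ Finset.Icc 1 m, (1 / (j : ℚ)) * (Nat.choose (m - 1) (j - 1) : ℚ) =
      (2 ^ m - 1) / m := by
  have hm0 : (m : ℚ) ≠ 0 := by exact_mod_cast Nat.one_le_iff_ne_zero.mp hm
  have h1 : ∀ j ∈ Finset.Icc 1 m,
      (1 / (j : ℚ)) * (Nat.choose (m - 1) (j - 1) : ℚ)
        = (1 / (m : ℚ)) * (Nat.choose m j : ℚ) := by
    intro j hj
    simp only [Finset.mem_Icc] at hj
    have hj0 : (j : ℚ) ≠ 0 := by exact_mod_cast Nat.one_le_iff_ne_zero.mp hj.1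
    have key : m * Nat.choose (m - 1) (j - 1) = Nat.choose m j * j := by
      have h := Nat.add_one_mul_choose_eq (m - 1) (j - 1)
      have h2 : m - 1 + 1 = m := by omega
      have h3 : j - 1 + 1 = j := by omega
      rw [h2, h3] at h
      exact h
    have keyQ : (m : ℚ) * (Nat.choose (m - 1) (j - 1) : ℚ)
        = (Nat.choose m j : ℚ) * j := by exact_mod_cast key
    field_simp
    linarith [keyQ]
  rw [Finset.sum_congr rfl h1, ← Finset.mul_sum]
  have h2 : Finset.Icc 1 m = (Finset.range (m + 1)).erase 0 := by
    ext x; simp [Finset.mem_Icc, Finset.mem_range]; omega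
  have h3 : ∑ j ∈ Finset.Icc 1 m, (Nat.choose m j : ℚ) = 2 ^ m - 1 := by
    rw [h2, Finset.sum_erase_eq_sub (by simp)]
    have : ∑ j ∈ Finset.range (m + 1), (Nat.choose m j : ℚ) = 2 ^ m := by
      exact_mod_cast congrArg (Nat.cast (R := ℚ)) (Nat.sum_range_choose m)
    simp [this]
  rw [h3]; ring


/-- Lemma 2. -/
theorem lemma2 (n : ℕ) (hn : 1 ≤ n) :
    (∑ k ∈ Finset.Icc 1 n, (1 / (k : ℚ)) * ∑ d ∈ (Nat.gcd n k).divisors,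
        (Nat.totient d : ℚ) * (Nat.choose (n / d - 1) (k / d - 1) : ℚ)) =
      -1 + (1 / (n : ℚ)) * ∑ d ∈ n.divisors, (Nat.totient d : ℚ) * 2 ^ (n / d) := by
  have hn0 : n ≠ 0 := by omega
  have hnQ : (n : ℚ) ≠ 0 := by exact_mod_cast hn0
  -- Step 1: rewrite inner sum over divisors of gcd as filtered sum over divisors of n
  have step1 : ∀ k ∈ Finset.Icc 1 n,
      (1 / (k : ℚ)) * ∑ d ∈ (Nat.gcd n k).divisors,
        (Nat.totient d : ℚ) * (Nat.choose (n / d - 1) (k / d - 1) : ℚ)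
      = ∑ d ∈ n.divisors, (if d ∣ k then
          (1 / (k : ℚ)) * ((Nat.totient d : ℚ) * (Nat.choose (n / d - 1) (k / d - 1) : ℚ))
          else 0) := by
    intro k hk
    simp only [Finset.mem_Icc] at hk
    have hgcd : (Nat.gcd n k).divisors = n.divisors.filter (· ∣ k) := by
      ext d
      simp only [Nat.mem_divisors, Finset.mem_filter, Nat.dvd_gcd_iff]
      constructor
      · rintro ⟨⟨h1, h2⟩, -⟩; exact ⟨⟨h1, hn0⟩, h2⟩
      · rintro ⟨⟨h1, -⟩, h2⟩
        exact ⟨⟨h1, h2⟩, Nat.gcd_ne_zero_left hn0⟩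
    rw [hgcd, Finset.sum_filter, Finset.mul_sum]
    apply Finset.sum_congr rfl
    intro d _; split <;> simp
  rw [Finset.sum_congr rfl step1, Finset.sum_comm]
  -- Step 2: for each d ∣ n, compute inner sum over k
  have step2 : ∀ d ∈ n.divisors,
      (∑ k ∈ Finset.Icc 1 n, if d ∣ k then
          (1 / (k : ℚ)) * ((Nat.totient d : ℚ) * (Nat.choose (n / d - 1) (k / d - 1) : ℚ))
          else 0)
      = (Nat.totient d : ℚ) * (2 ^ (n / d) - 1) / n := by
    intro d hd
    rw [Nat.mem_divisors] at hd
    obtain ⟨⟨m, hm⟩, -⟩ := hd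
    have hd0 : d ≠ 0 := by rintro rfl; simp at hm; omega
    have hm0 : m ≠ 0 := by rintro rfl; simp at hm; omega
    have hnd : n / d = m := by rw [hm]; exact Nat.mul_div_cancel_left m (Nat.pos_of_ne_zero hd0)
    rw [← Finset.sum_filter]
    have hbij : ∑ k ∈ (Finset.Icc 1 n).filter (d ∣ ·),
        (1 / (k : ℚ)) * ((Nat.totient d : ℚ) * (Nat.choose (n / d - 1) (k / d - 1) : ℚ))
        = ∑ j ∈ Finset.Icc 1 m,
        (1 / ((d * j : ℕ) : ℚ)) * ((Nat.totient d : ℚ) * (Nat.choose (n / d - 1) (j - 1) : ℚ)) := by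
      apply Finset.sum_nbij' (fun k => k / d) (fun j => d * j)
      · intro k hk
        simp only [Finset.mem_filter, Finset.mem_Icc] at hk ⊢
        obtain ⟨⟨h1, h2⟩, h3⟩ := hk
        constructor
        · exact Nat.one_le_div_iff (Nat.pos_of_ne_zero hd0) |>.mpr (Nat.le_of_dvd (by omega) h3)
        · rw [hm] at h2; exact Nat.div_le_div_right h2 |>.trans_eq (Nat.mul_div_cancel_left m (Nat.pos_of_ne_zero hd0))
      · intro j hj
        simp only [Finset.mem_Icc, Finset.mem_filter] at hj ⊢
        refine ⟨⟨by nlinarith [Nat.pos_of_ne_zero hd0, hj.1], ?_⟩, Dvd.intro j rfl⟩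
        rw [hm]; exact Nat.mul_le_mul_left d hj.2
      · intro k hk
        simp only [Finset.mem_filter] at hk
        exact Nat.mul_div_cancel' hk.2
      · intro j _
        exact Nat.mul_div_cancel_left j (Nat.pos_of_ne_zero hd0)
      · intro k hk
        simp only [Finset.mem_filter] at hk
        rw [Nat.mul_div_cancel' hk.2]
    rw [hbij]
    have : ∀ j ∈ Finset.Icc 1 m,
        (1 / ((d * j : ℕ) : ℚ)) * ((Nat.totient d : ℚ) * (Nat.choose (n / d - 1) (j - 1) : ℚ))
        = (Nat.totient d : ℚ) / d * ((1 / (j : ℚ)) * (Nat.choose (m - 1) (j - 1) : ℚ)) := by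
      intro j hj
      simp only [Finset.mem_Icc] at hj
      have hjQ : (j : ℚ) ≠ 0 := by exact_mod_cast Nat.one_le_iff_ne_zero.mp hj.1
      have hdQ : (d : ℚ) ≠ 0 := by exact_mod_cast hd0
      rw [hnd]
      push_cast
      field_simp
    rw [Finset.sum_congr rfl this, ← Finset.mul_sum,
      keysum m (Nat.one_le_iff_ne_zero.mpr hm0), hnd]
    have hdQ : (d : ℚ) ≠ 0 := by exact_mod_cast hd0
    have hmQ : (m : ℚ) ≠ 0 := by exact_mod_cast hm0
    have hnm : (n : ℚ) = d * m := by exact_mod_cast hm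
    rw [hnm]
    field_simp
  rw [Finset.sum_congr rfl step2]
  -- Step 3: conclude
  have htot : ∑ d ∈ n.divisors, (Nat.totient d : ℚ) = n := by
    exact_mod_cast congrArg (Nat.cast (R := ℚ)) (Nat.sum_totient n)
  have expand : ∀ d ∈ n.divisors,
      (Nat.totient d : ℚ) * (2 ^ (n / d) - 1) / n
      = (1 / (n : ℚ)) * ((Nat.totient d : ℚ) * 2 ^ (n / d)) - (1 / (n : ℚ)) * (Nat.totient d : ℚ) := by
    intro d _; field_simp
  rw [Finset.sum_congr rfl expand, Finset.sum_sub_distrib, ← Finset.mul_sum, ← Finset.mul_sum,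
    htot]
  field_simp
  ring
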